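/- A group G has a normal soluble subgroup of finite index if and only if G is covered by finitely many soluble subgroups. -/

import Mathlib

open scoped Pointwise

/-- A group has a normal soluble subgroup of finite index if and only if it is
covered by finitely many soluble subgroups. -/
theorem virtually_solvable_iff_finite_solvable_cover {G : Type*} [Group G] :
    (∃ N : Subgroup G, N.Normal ∧ IsSolvable N ∧ N.FiniteIndex) ↔
    (∃ S : Finset (Subgroup G), (∀ H ∈ S, IsSolvable H) ∧
      ∀ x : G, ∃ H ∈ S, x ∈ H) := by
  classical
  constructor
  · rintro ⟨N, hN, hsol, hfi⟩
    have hFin : Fintype (G ⧸ N) := N.fintypeOfIndexNeZero hfi.index_ne_zero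
    -- for each g : G, the preimage of the cyclic group generated by g N
    let K : G → Subgroup G := fun g =>
      (Subgroup.zpowers ((g : G ⧸ N))).comap (QuotientGroup.mk' N)
    have hKsol : ∀ g : G, IsSolvable (K g) := by
      intro g
      -- K g is an extension of N by a subgroup of a cyclic group
      let f : N →* (K g) := Subgroup.inclusion (by
        intro x hx
        simp only [K, Subgroup.mem_comap, QuotientGroup.mk'_apply]
        have : ((x : G) : G ⧸ N) = 1 := (QuotientGroup.eq_one_iff _).mpr hx
        rw [this]; exact Subgroup.one_mem _)
      let q : (K g) →* (Subgroup.zpowers ((g : G ⧸ N))) :=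
        ((QuotientGroup.mk' N).comp (K g).subtype).codRestrict _ (by
          rintro ⟨x, hx⟩; exact hx)
      refine solvable_of_ker_le_range f q ?_ (hG' := hsol)
      rintro ⟨x, hx⟩ hker
      have hxN : x ∈ N := by
        have h1 : ((x : G) : G ⧸ N) = 1 := congrArg Subtype.val hker
        exact (QuotientGroup.eq_one_iff _).mp h1
      exact ⟨⟨x, hxN⟩, rfl⟩
    refine ⟨Finset.image (fun q : G ⧸ N => K q.out) Finset.univ, ?_, ?_⟩
    · intro H hH
      rcases Finset.mem_image.mp hH with ⟨q, -, rfl⟩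
      exact hKsol _
    · intro x
      refine ⟨K ((x : G ⧸ N)).out,
        Finset.mem_image.mpr ⟨(x : G ⧸ N), Finset.mem_univ _, rfl⟩, ?_⟩
      simp only [K, Subgroup.mem_comap, QuotientGroup.mk'_apply]
      have h2 : ((((x : G ⧸ N)).out : G) : G ⧸ N) = (x : G ⧸ N) :=
        QuotientGroup.out_eq' _
      rw [h2]
      exact Subgroup.mem_zpowers _
  · rintro ⟨S, hsol, hcov⟩
    have hcovers : ⋃ H ∈ S, ((fun _ : Subgroup G => (1 : G)) H) • ((H : Subgroup G) : Set G)
        = Set.univ := by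
      ext x
      simp only [Set.mem_iUnion, Set.mem_univ, iff_true, one_smul]
      rcases hcov x with ⟨H, hH, hx⟩
      exact ⟨H, hH, hx⟩
    obtain ⟨H, hHS, hfi⟩ := Subgroup.exists_finiteIndex_of_leftCoset_cover hcovers
    have : IsSolvable H := hsol H hHS
    refine ⟨H.normalCore, H.normalCore_normal, ?_, inferInstance⟩
    exact @solvable_of_solvable_injective _ _ _ _ _ (Subgroup.inclusion_injective H.normalCore_le) this
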